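/- arXiv:2011.12418 — 5 statements merged into one kernel-verified Lean document; each statement's English description precedes it below -/
import Mathlib

section
/- Let (V, B, q) be a proper quadratic space over ℤ/2, i.e. q vanishes on the radical R = {r ∈ V : B(r,v) = 0 for all v}. Then the fibers of q are unbalanced: the cardinality of q⁻¹(0) is not equal to the cardinality of q⁻¹(1), i.e. q₀ ≠ q₁. -/
open Finset

/-- A proper quadratic space over `ℤ/2` has unbalanced fibers: `card q⁻¹(0) ≠ card q⁻¹(1)`. -/
theorem stmt_2 {V : Type*} [AddCommGroup V] [Module (ZMod 2) V] [Finite V]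
    (B : V →ₗ[ZMod 2] V →ₗ[ZMod 2] ZMod 2) (q : V → ZMod 2)
    (hq : ∀ x y : V, q (x + y) = q x + q y + B x y)
    (hproper : ∀ r : V, (∀ v : V, B r v = 0) → q r = 0) :
    Nat.card {x : V // q x = 0} ≠ Nat.card {x : V // q x = 1} := by
  cases nonempty_fintype V
  classical
  set χ : ZMod 2 → ℤ := fun a => if a = 0 then 1 else (-1) with hχ
  have hχadd : ∀ a b : ZMod 2, χ (a + b) = χ a * χ b := by decide
  have hχone : ∀ a : ZMod 2, χ (a + 1) = -χ a := by decide
  have hsym : ∀ x y : V, B x y = B y x := by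
    intro x y
    have h1 := hq x y
    have h2 := hq y x
    rw [add_comm x y] at h1
    rw [add_comm (q y) (q x)] at h2
    exact add_left_cancel (h1.symm.trans h2)
  set S : ℤ := ∑ x : V, χ (q x) with hS
  have key : S * S = ∑ z : V, χ (q z) * ∑ x : V, χ (B x z) := by
    calc S * S = ∑ x : V, ∑ y : V, χ (q x) * χ (q y) := by
          rw [hS, Finset.sum_mul_sum]
      _ = ∑ x : V, ∑ z : V, χ (q x) * χ (q (x + z)) := by
          refine Finset.sum_congr rfl fun x _ => ?_
          exact (Fintype.sum_equiv (Equiv.addLeft x)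
            (fun z => χ (q x) * χ (q (x + z))) (fun y => χ (q x) * χ (q y))
            (fun z => rfl)).symm
      _ = ∑ x : V, ∑ z : V, χ (q z) * χ (B x z) := by
          refine Finset.sum_congr rfl fun x _ => Finset.sum_congr rfl fun z _ => ?_
          rw [← hχadd, ← hχadd]
          congr 1
          rw [hq x z]
          have h0 : q x + (q x + q z + B x z) = (q x + q x) + (q z + B x z) := by ring
          rw [h0, CharTwo.add_self_eq_zero, zero_add]
      _ = ∑ z : V, ∑ x : V, χ (q z) * χ (B x z) := Finset.sum_comm
      _ = ∑ z : V, χ (q z) * ∑ x : V, χ (B x z) := by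
          simp [Finset.mul_sum]
  have hinner : ∀ z : V, (¬ ∀ x : V, B x z = 0) → (∑ x : V, χ (B x z)) = 0 := by
    intro z hz
    push_neg at hz
    obtain ⟨v, hv⟩ := hz
    have hone : ∀ a : ZMod 2, a ≠ 0 → a = 1 := by decide
    have hv1 : B v z = 1 := hone _ hv
    have h2 : ∑ x : V, χ (B x z) = ∑ x : V, χ (B (v + x) z) :=
      (Fintype.sum_equiv (Equiv.addLeft v) (fun x => χ (B (v + x) z))
        (fun x => χ (B x z)) (fun x => rfl)).symm
    have h3 : ∀ x : V, χ (B (v + x) z) = -χ (B x z) := by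
      intro x
      have hb : B (v + x) z = B x z + 1 := by
        rw [map_add, LinearMap.add_apply, hv1, add_comm]
      rw [hb, hχone]
    have h4 : ∑ x : V, χ (B x z) = -∑ x : V, χ (B x z) := by
      calc ∑ x : V, χ (B x z) = ∑ x : V, χ (B (v + x) z) := h2
        _ = ∑ x : V, -χ (B x z) := Finset.sum_congr rfl fun x _ => h3 x
        _ = -∑ x : V, χ (B x z) := by rw [Finset.sum_neg_distrib]
    linarith
  have hrad : ∀ z : V, (∀ x : V, B x z = 0) → χ (q z) = 1 := by
    intro z hz
    have hq0 : q z = 0 := hproper z fun v => (hsym z v).trans (hz v)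
    simp [hχ, hq0]
  have key2 : S * S = ∑ z : V, (if ∀ x : V, B x z = 0 then (Fintype.card V : ℤ) else 0) := by
    rw [key]
    refine Finset.sum_congr rfl fun z _ => ?_
    split_ifs with h
    · rw [hrad z h, one_mul]
      have : ∀ x : V, χ (B x z) = 1 := fun x => by simp [hχ, h x]
      simp [this]
    · rw [hinner z h, mul_zero]
  have hpos : 0 < S * S := by
    rw [key2]
    refine Finset.sum_pos' (fun z _ => ?_) ⟨0, Finset.mem_univ 0, ?_⟩
    · split_ifs <;> positivity
    · have h0 : ∀ x : V, B x (0 : V) = 0 := fun x => map_zero (B x)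
      rw [if_pos h0]
      exact_mod_cast Fintype.card_pos
  have hSne : S ≠ 0 := by
    intro h
    rw [h, mul_zero] at hpos
    exact lt_irrefl 0 hpos
  have hχsplit : ∀ a : ZMod 2,
      χ a = (if a = 0 then (1 : ℤ) else 0) - (if a = 1 then 1 else 0) := by decide
  have hcount : S = (Nat.card {x : V // q x = 0} : ℤ) - (Nat.card {x : V // q x = 1} : ℤ) := by
    rw [Nat.card_eq_fintype_card, Nat.card_eq_fintype_card,
      Fintype.card_subtype, Fintype.card_subtype]
    calc S = ∑ x : V, ((if q x = 0 then (1 : ℤ) else 0) - if q x = 1 then 1 else 0) :=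
        Finset.sum_congr rfl fun x _ => hχsplit (q x)
      _ = _ := by
        rw [Finset.sum_sub_distrib, Finset.sum_boole, Finset.sum_boole]
  intro heq
  apply hSne
  rw [hcount, heq, sub_self]
end

section
/- Let (V, B, q) be a quadratic space over ℤ/2. Then the fibers of q are balanced (the cardinality of q⁻¹(0) equals the cardinality of q⁻¹(1)) if and only if the space is not proper, i.e. if and only if there exists an element r with B(r,v) = 0 for all v ∈ V and q(r) = 1. -/
private def chi (a : ZMod 2) : ℤ := if a = 0 then 1 else -1

private lemma chi_add : ∀ a b : ZMod 2, chi (a + b) = chi a * chi b := by decide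

private lemma chi_one : chi 1 = -1 := by decide

private lemma chi_eq : ∀ a : ZMod 2,
    chi a = (if a = 0 then (1:ℤ) else 0) - (if a = 1 then 1 else 0) := by decide

private lemma zmod_cancel : ∀ a b c : ZMod 2, a + (a + b + c) = b + c := by decide

private lemma zmod_ne : ∀ a : ZMod 2, a ≠ 0 → a = 1 := by decide

/-- The fibers of a quadratic form `q` over `ℤ/2` are balanced if and only if the
quadratic space is not proper, i.e. there is a radical element `r` with `q r = 1`. -/
theorem stmt_3 {V : Type*} [AddCommGroup V] [Module (ZMod 2) V] [Finite V]
    (B : V →ₗ[ZMod 2] V →ₗ[ZMod 2] ZMod 2) (q : V → ZMod 2)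
    (hq : ∀ x y : V, q (x + y) = q x + q y + B x y) :
    Nat.card {x : V // q x = 0} = Nat.card {x : V // q x = 1} ↔
      ∃ r : V, (∀ v : V, B r v = 0) ∧ q r = 1 := by
  classical
  letI : Fintype V := Fintype.ofFinite V
  have hsym : ∀ x y : V, B x y = B y x := by
    intro x y
    have h1 := hq x y
    rw [add_comm x y, hq y x] at h1
    have h2 : q x + q y + B y x = q x + q y + B x y := by
      rw [← h1]; ring
    exact (add_left_cancel h2).symm
  set S : ℤ := ∑ x : V, chi (q x) with hS
  have hSval : S = ((Finset.univ.filter fun x : V => q x = 0).card : ℤ)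
      - ((Finset.univ.filter fun x : V => q x = 1).card : ℤ) := by
    rw [hS]
    calc ∑ x : V, chi (q x)
        = ∑ x : V, ((if q x = 0 then (1:ℤ) else 0) - (if q x = 1 then 1 else 0)) :=
          Finset.sum_congr rfl fun x _ => chi_eq (q x)
      _ = _ := by rw [Finset.sum_sub_distrib, Finset.sum_boole, Finset.sum_boole]
  have hcard0 : Nat.card {x : V // q x = 0}
      = (Finset.univ.filter fun x : V => q x = 0).card := by
    rw [Nat.card_eq_fintype_card, Fintype.card_subtype]
  have hcard1 : Nat.card {x : V // q x = 1}
      = (Finset.univ.filter fun x : V => q x = 1).card := by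
    rw [Nat.card_eq_fintype_card, Fintype.card_subtype]
  constructor
  · -- forward: balanced → exists radical r with q r = 1
    intro hcards
    by_contra h
    push_neg at h
    have hrad : ∀ y : V, (∀ x : V, B x y = 0) → q y = 0 := by
      intro y hy
      by_contra hne
      exact absurd (zmod_ne _ hne) (h y (fun v => (hsym y v).trans (hy v)))
    -- inner sum
    have hT : ∀ y : V, ∑ x : V, chi (B x y)
        = if (∀ x : V, B x y = 0) then (Fintype.card V : ℤ) else 0 := by
      intro y
      split_ifs with h0
      · simp [chi, h0]
      · push_neg at h0
        obtain ⟨x0, hx0⟩ := h0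
        have hx1 : B x0 y = 1 := zmod_ne _ hx0
        have hrei : ∑ x : V, chi (B x y) = ∑ x : V, chi (B (x + x0) y) :=
          (Equiv.sum_comp (Equiv.addRight x0) fun x => chi (B x y)).symm
        have hneg : ∑ x : V, chi (B (x + x0) y) = - ∑ x : V, chi (B x y) := by
          rw [← Finset.sum_neg_distrib]
          refine Finset.sum_congr rfl fun x _ => ?_
          have : B (x + x0) y = B x y + 1 := by
            rw [map_add, LinearMap.add_apply, hx1]
          rw [this, chi_add, chi_one]; ring
        have := hrei.trans hneg
        linarith
    have hSS : S * S = ∑ y : V, chi (q y) * (∑ x : V, chi (B x y)) := by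
      rw [hS, Finset.sum_mul_sum]
      have step1 : ∀ x : V, ∑ y : V, chi (q x) * chi (q y)
          = ∑ y : V, chi (q y) * chi (B x y) := by
        intro x
        have e1 : ∑ y : V, chi (q x) * chi (q y)
            = ∑ y : V, chi (q x) * chi (q (x + y)) :=
          (Equiv.sum_comp (Equiv.addLeft x) fun z => chi (q x) * chi (q z)).symm
        rw [e1]
        refine Finset.sum_congr rfl fun y _ => ?_
        rw [← chi_add]
        have : q x + q (x + y) = q y + B x y := by
          rw [hq x y]; exact zmod_cancel _ _ _
        rw [this, chi_add]
      calc ∑ x : V, ∑ y : V, chi (q x) * chi (q y)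
          = ∑ x : V, ∑ y : V, chi (q y) * chi (B x y) :=
            Finset.sum_congr rfl fun x _ => step1 x
        _ = ∑ y : V, ∑ x : V, chi (q y) * chi (B x y) := Finset.sum_comm
        _ = ∑ y : V, chi (q y) * ∑ x : V, chi (B x y) := by
            refine Finset.sum_congr rfl fun y _ => ?_
            rw [Finset.mul_sum]
    have hSS2 : S * S = ∑ y : V, (if (∀ x : V, B x y = 0) then (Fintype.card V : ℤ) else 0) := by
      rw [hSS]
      refine Finset.sum_congr rfl fun y _ => ?_
      rw [hT y]
      split_ifs with h0
      · rw [hrad y h0]; simp [chi]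
      · ring
    have hpos : (Fintype.card V : ℤ) ≤ S * S := by
      rw [hSS2]
      have h0mem : (0 : V) ∈ Finset.univ := Finset.mem_univ 0
      have := Finset.single_le_sum
        (f := fun y : V => if (∀ x : V, B x y = 0) then (Fintype.card V : ℤ) else 0)
        (fun y _ => by positivity) h0mem
      simpa [show (∀ x : V, B x (0:V) = 0) from fun x => map_zero (B x)] using this
    have hScard : S = 0 := by
      rw [hSval, ← hcard0, ← hcard1, hcards]; ring
    rw [hScard] at hpos
    have : (0:ℤ) < Fintype.card V := by exact_mod_cast Fintype.card_pos
    linarith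
  · rintro ⟨r, hr, hqr⟩
    have hflip : ∀ x : V, chi (q (x + r)) = - chi (q x) := by
      intro x
      have hb : B x r = 0 := (hsym x r).trans (hr x)
      rw [hq x r, hb, add_zero, chi_add, hqr, chi_one]; ring
    have : S = -S := by
      rw [hS]
      calc ∑ x : V, chi (q x)
          = ∑ x : V, chi (q (x + r)) :=
            (Equiv.sum_comp (Equiv.addRight r) fun x => chi (q x)).symm
        _ = ∑ x : V, - chi (q x) := Finset.sum_congr rfl fun x _ => hflip x
        _ = -S := by rw [Finset.sum_neg_distrib, hS]
    have hS0 : S = 0 := by linarith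
    rw [hSval] at hS0
    rw [hcard0, hcard1]
    omega
end

section
/- Democratic computation of the Arf invariant: let (V, B, q) be a proper quadratic space over ℤ/2 (q vanishes on the radical R), and suppose a₁,…,aₙ, b₁,…,bₙ are elements of V satisfying B(aᵢ,aⱼ) = 0 and B(bᵢ,bⱼ) = 0 for all i, j, B(aᵢ,bⱼ) = 1 if i = j and 0 otherwise, and such that V is spanned by the aᵢ, the bᵢ, and the radical R (i.e. every element of V is a sum of an element of the span of {aᵢ, bᵢ} and an element of R). Then q₀ ≠ q₁, and the Arf invariant Σᵢ q(aᵢ)·q(bᵢ) ∈ ZMod 2 equals 0 if and only if q₀ > q₁ (equivalently, it equals 1 if and only if q₀ < q₁). -/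
/-- Democratic computation of the Arf invariant: for a proper quadratic space over `ℤ/2`
with a symplectic family `a₁,…,aₙ,b₁,…,bₙ` spanning `V` together with the radical,
the fibers of `q` are unbalanced, and the Arf invariant `Σᵢ q(aᵢ)·q(bᵢ)` is `0`
exactly when `card q⁻¹(0) > card q⁻¹(1)`. -/
theorem stmt_4 {V : Type*} [AddCommGroup V] [Module (ZMod 2) V] [Finite V]
    (B : V →ₗ[ZMod 2] V →ₗ[ZMod 2] ZMod 2) (q : V → ZMod 2)
    (hq : ∀ x y : V, q (x + y) = q x + q y + B x y)
    (hproper : ∀ r : V, (∀ v : V, B r v = 0) → q r = 0)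
    (n : ℕ) (a b : Fin n → V)
    (haa : ∀ i j, B (a i) (a j) = 0)
    (hbb : ∀ i j, B (b i) (b j) = 0)
    (hab : ∀ i j, B (a i) (b j) = if i = j then 1 else 0)
    (hspan : ∀ v : V, ∃ w ∈ Submodule.span (ZMod 2) (Set.range a ∪ Set.range b),
      ∃ r : V, (∀ u : V, B r u = 0) ∧ v = w + r) :
    Nat.card {x : V // q x = 0} ≠ Nat.card {x : V // q x = 1} ∧
      ((∑ i : Fin n, q (a i) * q (b i)) = 0 ↔
        Nat.card {x : V // q x = 0} > Nat.card {x : V // q x = 1}) := by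
  classical
  have := Fintype.ofFinite V
  -- basic facts about q and B
  have htwo : ∀ c : ZMod 2, c + c = 0 := by decide
  have hzmod : ∀ c : ZMod 2, c = 0 ∨ c = 1 := by decide
  have hq0 : q 0 = 0 := by
    have h := hq 0 0
    simp only [add_zero, map_zero, LinearMap.zero_apply] at h
    rw [htwo] at h
    simpa using h
  have hsymm : ∀ x y : V, B x y = B y x := by
    intro x y
    have h1 := hq x y
    have h2 := hq y x
    rw [add_comm y x] at h2
    have h3 : q x + q y + B x y = q y + q x + B y x := h1.symm.trans h2
    linear_combination h3
  have hqsmul : ∀ (c : ZMod 2) (v : V), q (c • v) = c * q v := by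
    intro c v
    rcases hzmod c with hc | hc <;> subst hc
    · simp [hq0]
    · simp
  -- q of an orthogonal sum
  have hqsum : ∀ (v : Fin n → V), (∀ i j, B (v i) (v j) = 0) →
      ∀ s : Finset (Fin n), q (∑ i ∈ s, v i) = ∑ i ∈ s, q (v i) := by
    intro v hv s
    induction s using Finset.induction_on with
    | empty => simpa using hq0
    | @insert i s hi ih =>
      rw [Finset.sum_insert hi, Finset.sum_insert hi, hq, ih]
      have : (B (v i)) (∑ j ∈ s, v j) = 0 := by
        rw [map_sum]
        simp [hv]
      rw [this, add_zero]
  have hqA : ∀ (c : Fin n → ZMod 2) (v : Fin n → V),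
      (∀ i j, B (v i) (v j) = 0) → q (∑ i, c i • v i) = ∑ i, c i * q (v i) := by
    intro c v hv
    rw [hqsum (fun i => c i • v i) (by intro i j; simp [map_smul, hv i j])]
    simp [hqsmul]
  -- the radical as a submodule
  set Rs : Submodule (ZMod 2) V := LinearMap.ker B with hRs
  let P := (Fin n → ZMod 2) × (Fin n → ZMod 2)
  let G := P × Rs
  let φ : G → V := fun g => (∑ i, g.1.1 i • a i) + (∑ i, g.1.2 i • b i) + (g.2 : V)
  have hradB : ∀ r : Rs, ∀ u : V, B (r : V) u = 0 := by
    intro r u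
    have : B (r : V) = 0 := LinearMap.mem_ker.1 r.2
    rw [this]; rfl
  have hφadd : ∀ g g' : G, φ (g + g') = φ g + φ g' := by
    rintro ⟨⟨x, y⟩, r⟩ ⟨⟨x', y'⟩, r'⟩
    show (∑ i, (x + x') i • a i) + (∑ i, (y + y') i • b i) + ((r + r' : Rs) : V) = _
    simp only [Pi.add_apply, add_smul, Finset.sum_add_distrib, Submodule.coe_add]
    show _ = (∑ i, x i • a i) + (∑ i, y i • b i) + (r : V) +
      ((∑ i, x' i • a i) + (∑ i, y' i • b i) + (r' : V))
    abel
  have hφ0 : φ 0 = 0 := by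
    simp [φ]
  have hGG : ∀ g : G, g + g = 0 := by
    intro g
    rw [← two_smul (ZMod 2) g, show (2 : ZMod 2) = 0 from rfl, zero_smul]
  have hVtwo : ∀ v : V, v + v = 0 := by
    intro v
    rw [← two_smul (ZMod 2) v, show (2 : ZMod 2) = 0 from rfl, zero_smul]
  -- the value of q on the image of φ
  let f : P → ZMod 2 := fun p =>
    (∑ i, p.1 i * q (a i)) + (∑ i, p.2 i * q (b i)) + ∑ i, p.1 i * p.2 i
  have hqφ : ∀ g : G, q (φ g) = f g.1 := by
    rintro ⟨⟨x, y⟩, r⟩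
    show q ((∑ i, x i • a i) + (∑ i, y i • b i) + (r : V)) = _
    rw [hq, hq, hproper _ (hradB r), hsymm _ (r : V), hradB r, add_zero, add_zero]
    have hBAC : (B (∑ i, x i • a i)) (∑ j, y j • b j) = ∑ i, x i * y i := by
      simp only [map_sum, LinearMap.sum_apply, map_smul, LinearMap.smul_apply,
        smul_eq_mul, hab, mul_ite, mul_one, mul_zero]
      refine Finset.sum_congr rfl fun i _ => ?_
      rw [Finset.sum_ite_eq']
      simp [mul_comm]
    rw [hBAC, hqA x a haa, hqA y b hbb]
  -- surjectivity of φ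
  have hφsurj : ∀ v : V, ∃ g : G, φ g = v := by
    intro v
    obtain ⟨w, hw, r, hr, hv⟩ := hspan v
    rw [Submodule.span_union] at hw
    obtain ⟨p, hp, c, hc, hpc⟩ := Submodule.mem_sup.1 hw
    obtain ⟨x, hx⟩ := (Submodule.mem_span_range_iff_exists_fun (ZMod 2)).1 hp
    obtain ⟨y, hy⟩ := (Submodule.mem_span_range_iff_exists_fun (ZMod 2)).1 hc
    refine ⟨⟨⟨x, y⟩, ⟨r, LinearMap.mem_ker.2 (LinearMap.ext fun u => by simp [hr u])⟩⟩, ?_⟩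
    show (∑ i, x i • a i) + (∑ i, y i • b i) + r = v
    rw [hx, hy, hpc, hv]
  -- the character
  let χ : ZMod 2 → ℤ := fun c => if c = 0 then 1 else -1
  have hχadd : ∀ c d : ZMod 2, χ (c + d) = χ c * χ d := by decide
  have hχ0 : χ 0 = 1 := rfl
  have hχsum : ∀ (s : Finset (Fin n)) (F : Fin n → ZMod 2),
      χ (∑ i ∈ s, F i) = ∏ i ∈ s, χ (F i) := by
    intro s F
    induction s using Finset.induction_on with
    | empty => simp [hχ0]
    | @insert i s hi ih =>
      rw [Finset.sum_insert hi, Finset.prod_insert hi, hχadd, ih]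
  -- fiber counts
  set K := (Finset.univ.filter (fun g : G => φ g = 0)).card with hK
  have hfib : ∀ v : V, (Finset.univ.filter (fun g : G => φ g = v)).card = K := by
    intro v
    obtain ⟨g₀, hg₀⟩ := hφsurj v
    rw [hK]
    apply Finset.card_bij' (fun g _ => g + g₀) (fun g _ => g + g₀)
    · intro g hg
      simp only [Finset.mem_filter, Finset.mem_univ, true_and] at hg ⊢
      rw [hφadd, hg, hg₀, hVtwo]
    · intro g hg
      simp only [Finset.mem_filter, Finset.mem_univ, true_and] at hg ⊢
      rw [hφadd, hg, hg₀, zero_add]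
    · intro g _; rw [add_assoc, hGG, add_zero]
    · intro g _; rw [add_assoc, hGG, add_zero]
  have hK0 : 0 < K := by
    rw [hK]
    apply Finset.card_pos.2
    exact ⟨0, by simp [hφ0]⟩
  -- the main Gauss sum identity
  have hmain : (K : ℤ) * (∑ v : V, χ (q v)) =
      (Fintype.card Rs : ℤ) * (2 ^ n * χ (∑ i : Fin n, q (a i) * q (b i))) := by
    have step1 : ∑ g : G, χ (q (φ g)) = (K : ℤ) * ∑ v : V, χ (q v) := by
      rw [Finset.sum_comp (fun v => χ (q v)) φ]
      have himg : Finset.univ.image φ = (Finset.univ : Finset V) := by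
        apply Finset.eq_univ_of_forall
        intro v
        obtain ⟨g, hg⟩ := hφsurj v
        exact Finset.mem_image.2 ⟨g, Finset.mem_univ g, hg⟩
      rw [himg, Finset.mul_sum]
      exact Finset.sum_congr rfl fun v _ => by rw [hfib v, nsmul_eq_mul]
    have step2 : ∑ g : G, χ (q (φ g)) =
        (Fintype.card Rs : ℤ) * ∑ p : P, χ (f p) := by
      have hg : ∀ g : G, χ (q (φ g)) = χ (f g.1) := fun g => by rw [hqφ g]
      simp only [hg]
      rw [Fintype.sum_prod_type, Finset.mul_sum]
      refine Finset.sum_congr rfl fun p _ => ?_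
      simp only [χ, Finset.sum_const, Finset.card_univ, nsmul_eq_mul, mul_ite]
    have step3 : ∑ p : P, χ (f p) = 2 ^ n * χ (∑ i : Fin n, q (a i) * q (b i)) := by
      set e := Equiv.arrowProdEquivProdArrow (Fin n) (fun _ => ZMod 2) (fun _ => ZMod 2) with he
      have e1 : ∑ p : P, χ (f p) = ∑ h : Fin n → ZMod 2 × ZMod 2,
          ∏ i, χ ((h i).1 * q (a i) + (h i).2 * q (b i) + (h i).1 * (h i).2) := by
        rw [← e.sum_comp (fun p => χ (f p))]
        refine Finset.sum_congr rfl fun h _ => ?_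
        rw [← hχsum]
        congr 1
        show (∑ i, (h i).1 * q (a i)) + (∑ i, (h i).2 * q (b i)) + ∑ i, (h i).1 * (h i).2 = _
        rw [Finset.sum_add_distrib, Finset.sum_add_distrib]
      have e2 : (∏ i : Fin n, ∑ s : ZMod 2 × ZMod 2,
          χ (s.1 * q (a i) + s.2 * q (b i) + s.1 * s.2)) = ∑ h : Fin n → ZMod 2 × ZMod 2,
          ∏ i, χ ((h i).1 * q (a i) + (h i).2 * q (b i) + (h i).1 * (h i).2) := by
        rw [Finset.prod_univ_sum]
        rw [Fintype.piFinset_univ]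
      have key : ∀ α β : ZMod 2,
          (∑ s : ZMod 2 × ZMod 2, χ (s.1 * α + s.2 * β + s.1 * s.2)) = 2 * χ (α * β) := by
        decide
      rw [e1, ← e2]
      calc (∏ i : Fin n, ∑ s : ZMod 2 × ZMod 2, χ (s.1 * q (a i) + s.2 * q (b i) + s.1 * s.2))
          = ∏ i : Fin n, (2 * χ (q (a i) * q (b i))) :=
            Finset.prod_congr rfl fun i _ => key _ _
        _ = 2 ^ n * ∏ i : Fin n, χ (q (a i) * q (b i)) := by
            rw [Finset.prod_mul_distrib, Finset.prod_const, Finset.card_univ,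
              Fintype.card_fin]
        _ = 2 ^ n * χ (∑ i : Fin n, q (a i) * q (b i)) := by rw [hχsum]
    rw [← step1, step2, step3]
  -- fiber cardinalities of q
  have hc0 : Nat.card {x : V // q x = 0} =
      (Finset.univ.filter (fun v : V => q v = 0)).card := by
    rw [Nat.card_eq_fintype_card, Fintype.card_subtype]
  have hc1 : Nat.card {x : V // q x = 1} =
      (Finset.univ.filter (fun v : V => q v = 1)).card := by
    rw [Nat.card_eq_fintype_card, Fintype.card_subtype]
  have hSV : (∑ v : V, χ (q v)) =
      (Nat.card {x : V // q x = 0} : ℤ) - (Nat.card {x : V // q x = 1} : ℤ) := by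
    rw [← Finset.sum_filter_add_sum_filter_not Finset.univ (fun v => q v = 0)]
    have hfe : Finset.univ.filter (fun v : V => ¬ q v = 0) =
        Finset.univ.filter (fun v : V => q v = 1) := by
      refine Finset.filter_congr fun v _ => ?_
      rcases hzmod (q v) with h | h <;> simp [h]
    rw [hfe]
    have h1 : ∑ v ∈ Finset.univ.filter (fun v : V => q v = 0), χ (q v) =
        (Nat.card {x : V // q x = 0} : ℤ) := by
      rw [Finset.sum_congr rfl (fun v hv => show χ (q v) = 1 by
        simp only [Finset.mem_filter] at hv; simp [χ, hv.2])]
      rw [Finset.sum_const, hc0, nsmul_eq_mul, mul_one]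
    have h2 : ∑ v ∈ Finset.univ.filter (fun v : V => q v = 1), χ (q v) =
        -(Nat.card {x : V // q x = 1} : ℤ) := by
      rw [Finset.sum_congr rfl (fun v hv => show χ (q v) = -1 by
        simp only [Finset.mem_filter] at hv; simp [χ, hv.2])]
      rw [Finset.sum_const, hc1, nsmul_eq_mul, mul_neg_one]
    rw [h1, h2]
    ring
  -- conclusion
  have hRpos : (0 : ℤ) < (Fintype.card Rs : ℤ) := by
    exact_mod_cast Fintype.card_pos_iff.2 ⟨0⟩
  have hKpos : (0 : ℤ) < (K : ℤ) := by exact_mod_cast hK0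
  set c0 : ℤ := (Nat.card {x : V // q x = 0} : ℤ) with hcc0
  set c1 : ℤ := (Nat.card {x : V // q x = 1} : ℤ) with hcc1
  rw [hSV] at hmain
  have h2pow : (0 : ℤ) < 2 ^ n := by positivity
  rcases hzmod (∑ i : Fin n, q (a i) * q (b i)) with harf | harf
  · have hχ1 : χ (∑ i : Fin n, q (a i) * q (b i)) = 1 := by rw [harf]; rfl
    rw [hχ1, mul_one] at hmain
    have hpos : (0 : ℤ) < c0 - c1 := by nlinarith
    have hlt : Nat.card {x : V // q x = 1} < Nat.card {x : V // q x = 0} := by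
      have h' : c1 < c0 := by linarith
      rw [hcc0, hcc1] at h'
      exact_mod_cast h'
    exact ⟨Ne.symm (Nat.ne_of_lt hlt), ⟨fun _ => hlt, fun _ => harf⟩⟩
  · have hχ1 : χ (∑ i : Fin n, q (a i) * q (b i)) = -1 := by rw [harf]; rfl
    rw [hχ1] at hmain
    have hneg : c0 - c1 < 0 := by nlinarith
    have hlt : Nat.card {x : V // q x = 0} < Nat.card {x : V // q x = 1} := by
      have h' : c0 < c1 := by linarith
      rw [hcc0, hcc1] at h'
      exact_mod_cast h'
    refine ⟨Nat.ne_of_lt hlt, ⟨fun h => ?_, fun h => ?_⟩⟩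
    · rw [harf] at h; exact absurd h (by decide)
    · exact absurd h (Nat.lt_asymm hlt)
end

section
/- Every ℤ/8-valued quadratic enhancement is twice a ℤ/4-valued enhancement: let V be a finite-dimensional vector space over ZMod 2, let B : V → V → ZMod 2 be a bilinear form, let ι₈ : ZMod 2 → ZMod 8 be the additive homomorphism with ι₈(1) = 4, and suppose f : V → ZMod 8 satisfies f(x+y) = f(x) + f(y) + ι₈(B(x,y)) for all x, y ∈ V. Then there exists e : V → ZMod 4 satisfying e(x+y) = e(x) + e(y) + ι₄(B(x,y)) for all x, y ∈ V (where ι₄ : ZMod 2 → ZMod 4 is the additive homomorphism with ι₄(1) = 2), such that f(x) = d(e(x)) for all x ∈ V, where d : ZMod 4 → ZMod 8 is the additive homomorphism with d(1) = 2. -/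
/-- Every `ℤ/8`-valued quadratic enhancement of a bilinear form over `ℤ/2` is twice a
`ℤ/4`-valued enhancement: given `f : V → ZMod 8` with
`f(x+y) = f x + f y + ι₈(B x y)` where `ι₈ 1 = 4`, there is `e : V → ZMod 4` with
`e(x+y) = e x + e y + ι₄(B x y)` (where `ι₄ 1 = 2`) and `f = d ∘ e`
(where `d : ZMod 4 →+ ZMod 8` has `d 1 = 2`). -/
theorem stmt_9 {V : Type*} [AddCommGroup V] [Module (ZMod 2) V] [Finite V]
    (B : V →ₗ[ZMod 2] V →ₗ[ZMod 2] ZMod 2)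
    (ι₈ : ZMod 2 →+ ZMod 8) (hι₈ : ι₈ 1 = 4)
    (ι₄ : ZMod 2 →+ ZMod 4) (hι₄ : ι₄ 1 = 2)
    (d : ZMod 4 →+ ZMod 8) (hd : d 1 = 2)
    (f : V → ZMod 8)
    (hf : ∀ x y : V, f (x + y) = f x + f y + ι₈ (B x y)) :
    ∃ e : V → ZMod 4,
      (∀ x y : V, e (x + y) = e x + e y + ι₄ (B x y)) ∧
      ∀ x : V, f x = d (e x) := by
  -- d on casts of naturals
  have hdn : ∀ a : ZMod 4, d a = ((a.val * 2 : ℕ) : ZMod 8) := by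
    intro a
    have h1 : ((a.val : ℕ) : ZMod 4) = a := by rw [ZMod.natCast_val, ZMod.cast_id]
    calc d a = d ((a.val : ℕ) : ZMod 4) := by rw [h1]
      _ = d (a.val • (1 : ZMod 4)) := by rw [nsmul_eq_mul, mul_one]
      _ = a.val • d 1 := map_nsmul d _ _
      _ = ((a.val * 2 : ℕ) : ZMod 8) := by rw [hd, nsmul_eq_mul]; push_cast; ring
  have hdinj : Function.Injective d := by
    intro a b h
    rw [hdn, hdn] at h
    revert h
    revert a b
    decide
  have hdi : ∀ c : ZMod 2, d (ι₄ c) = ι₈ c := by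
    intro c
    fin_cases c
    · show d (ι₄ 0) = ι₈ 0
      simp
    · show d (ι₄ 1) = ι₈ 1
      rw [hι₄, hι₈, show (2 : ZMod 4) = 1 + 1 by decide, map_add, hd]
      decide
  -- f 0 = 0
  have hf0 : f 0 = 0 := by
    have h := hf 0 0
    simp only [add_zero, map_zero] at h
    linear_combination -h
  -- f takes even values
  have heven : ∀ x : V, (f x).val % 2 = 0 := by
    intro x
    have hx2 : x + x = 0 := by
      have h : x + x = ((1 : ZMod 2) + 1) • x := by rw [add_smul, one_smul]
      rw [h, show (1 : ZMod 2) + 1 = 0 from rfl, zero_smul]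
    have h2 : f x + f x + ι₈ (B x x) = 0 := by rw [← hf, hx2, hf0]
    have hcases : ι₈ (B x x) = 0 ∨ ι₈ (B x x) = 4 := by
      rcases (by decide : ∀ c : ZMod 2, c = 0 ∨ c = 1) (B x x) with h | h
      · left; rw [h, map_zero]
      · right; rw [h, hι₈]
    have hev : f x + f x = 0 ∨ f x + f x = 4 := by
      rcases hcases with h | h
      · left; linear_combination h2 - h
      · right
        have h4 : f x + f x = -4 := by linear_combination h2 - h
        rw [h4]; decide
    revert hev
    generalize f x = z
    revert z
    decide
  have hde : ∀ x : V, d ((((f x).val / 2 : ℕ)) : ZMod 4) = f x := by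
    intro x
    rw [hdn, ZMod.val_natCast,
      Nat.mod_eq_of_lt (by have := (f x).val_lt; omega),
      Nat.div_mul_cancel (Nat.dvd_of_mod_eq_zero (heven x)),
      ZMod.natCast_val, ZMod.cast_id]
  refine ⟨fun x => ((((f x).val / 2 : ℕ)) : ZMod 4), ?_, fun x => (hde x).symm⟩
  intro x y
  apply hdinj
  simp only []
  rw [map_add, map_add, hdi, hde, hde, hde]
  exact hf x y
end

section
/- Let (V, B, e) be a ℤ/4-enhanced space. If there exists an element r in the radical (i.e. B(r,v) = 0 for all v ∈ V) with e(r) ≠ 0, then the fibers of e are balanced in pairs: the cardinality of e⁻¹(0) equals the cardinality of e⁻¹(2), and the cardinality of e⁻¹(1) equals the cardinality of e⁻¹(3). -/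
/-- If a `ℤ/4`-enhanced space `(V, B, e)` has a radical element `r` with `e r ≠ 0`, then
its fibers are balanced in pairs: `card e⁻¹(0) = card e⁻¹(2)` and
`card e⁻¹(1) = card e⁻¹(3)`. -/
theorem stmt_10 {V : Type*} [AddCommGroup V] [Module (ZMod 2) V] [Finite V]
    (B : V →ₗ[ZMod 2] V →ₗ[ZMod 2] ZMod 2)
    (ι : ZMod 2 →+ ZMod 4) (hι : ι 1 = 2)
    (e : V → ZMod 4)
    (he : ∀ x y : V, e (x + y) = e x + e y + ι (B x y))
    (r : V) (hr : ∀ v : V, B r v = 0) (her : e r ≠ 0) :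
    Nat.card {x : V // e x = 0} = Nat.card {x : V // e x = 2} ∧
      Nat.card {x : V // e x = 1} = Nat.card {x : V // e x = 3} := by
  have h0 : e 0 = 0 := by
    have h := he 0 0
    simp only [add_zero, map_zero, LinearMap.zero_apply] at h
    exact left_eq_add.mp h
  have hrr : r + r = 0 := by
    have : r + r = (2 : ZMod 2) • r := (two_smul _ r).symm
    rw [this, show (2 : ZMod 2) = 0 from rfl, zero_smul]
  have her2 : e r = 2 := by
    have h := he r r
    rw [hrr, h0, hr, map_zero, add_zero] at h
    have h' : e r + e r = 0 := h.symm
    revert her h'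
    generalize e r = c
    revert c
    decide
  have hshift : ∀ x : V, e (r + x) = 2 + e x := by
    intro x
    rw [he, hr, map_zero, add_zero, her2, add_comm]
  have hinv : ∀ x : V, r + (r + x) = x := by
    intro x
    rw [← add_assoc, hrr, zero_add]
  have key : ∀ a : ZMod 4,
      Nat.card {x : V // e x = a} = Nat.card {x : V // e x = a + 2} := by
    intro a
    refine Nat.card_congr ⟨fun x => ⟨r + x.1, ?_⟩, fun y => ⟨r + y.1, ?_⟩, ?_, ?_⟩
    · rw [hshift, x.2, add_comm]
    · rw [hshift, y.2]
      have h4 : (2 : ZMod 4) + 2 = 0 := rfl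
      rw [add_comm a 2, ← add_assoc, h4, zero_add]
    · intro x; exact Subtype.ext (hinv x.1)
    · intro y; exact Subtype.ext (hinv y.1)
  exact ⟨by simpa using key 0, by have h3 : (1 : ZMod 4) + 2 = 3 := rfl; rw [key 1, h3]⟩
end
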